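/- Let N ≥ 1 be a natural number, Z ∈ ℂ, and Q ∈ ℂ with 0 < ‖Q‖ < 1. For l ∈ ℤ define τ_l := ∏_{n=1}^{∞} (1 − Z·Q^{l+nN})ⁿ (the product is multipliable since ‖Q^N‖ < 1). Then for all l ∈ ℤ: τ_{l+N}·τ_{l−N} = (1 − Z·Q^l)·τ_l². Consequently, the constant-in-j family τ_{j,l} := τ_l (j ∈ ℤ/Nℤ) solves the Y^{N,0} bilinear system τ_{j,l+N}·τ_{j,l−N} = τ_{j,l}² − Z·Q^l·τ_{j+1,l}·τ_{j−1,l}. -/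

import Mathlib

open Filter Complex Real

/-- `‖(1+w)^k - 1‖ ≤ (1+‖w‖)^k - 1`. -/
lemma norm_one_add_pow_sub_one_le (w : ℂ) (k : ℕ) :
    ‖(1 + w) ^ k - 1‖ ≤ (1 + ‖w‖) ^ k - 1 := by
  induction k with
  | zero => simp
  | succ k ih =>
    have h1 : (1 + w) ^ (k + 1) - 1 = ((1 + w) ^ k - 1) + w * (1 + w) ^ k := by ring
    have h2 : ‖(1 + w) ^ k‖ ≤ (1 + ‖w‖) ^ k := by
      rw [norm_pow]
      exact pow_le_pow_left₀ (norm_nonneg _) ((norm_add_le _ _).trans (by simp)) k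
    calc ‖(1 + w) ^ (k + 1) - 1‖ ≤ ‖(1 + w) ^ k - 1‖ + ‖w‖ * ‖(1 + w) ^ k‖ := by
          rw [h1]; exact (norm_add_le _ _).trans (by rw [norm_mul])
      _ ≤ ((1 + ‖w‖) ^ k - 1) + ‖w‖ * (1 + ‖w‖) ^ k := by
          gcongr
      _ = (1 + ‖w‖) ^ (k + 1) - 1 := by ring

lemma one_add_pow_sub_one_le (t : ℝ) (ht : 0 ≤ t) (k : ℕ) :
    (1 + t) ^ k - 1 ≤ (k * t) * Real.exp (k * t) := by
  have h1 : (1 + t) ^ k ≤ Real.exp (k * t) := by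
    calc (1 + t) ^ k ≤ (Real.exp t) ^ k := by
          refine pow_le_pow_left₀ (by linarith) ?_ k
          simpa [add_comm] using Real.add_one_le_exp t
      _ = Real.exp (k * t) := by rw [← Real.exp_nat_mul]
  have h2 : Real.exp (↑k * t) - 1 ≤ (↑k * t) * Real.exp (↑k * t) := by
    set x : ℝ := ↑k * t with hx
    have hx0 : 0 ≤ x := by positivity
    have h3 : -x + 1 ≤ Real.exp (-x) := Real.add_one_le_exp (-x)
    have h4 : Real.exp (-x) * Real.exp x = 1 := by
      rw [← Real.exp_add]; simp
    nlinarith [Real.exp_pos x]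
  linarith

lemma summable_t (c r : ℂ) (hr : ‖r‖ < 1) (s : ℕ) :
    Summable fun n : ℕ => ((n + s : ℕ) : ℝ) * (‖c‖ * ‖r‖ ^ (n + 1)) := by
  have hr' : ‖(‖r‖)‖ < 1 := by rwa [Real.norm_of_nonneg (norm_nonneg r)]
  have h1 : Summable fun n : ℕ => ((n : ℝ) * ‖r‖ ^ n) * (‖c‖ * ‖r‖) :=
    ((summable_pow_mul_geometric_of_norm_lt_one (r := ‖r‖) 1 hr').congr
      (fun n => by simp)).mul_right _
  have h2 : Summable fun n : ℕ => (‖r‖ ^ n) * ((s : ℝ) * ‖c‖ * ‖r‖) :=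
    (summable_geometric_of_lt_one (norm_nonneg _) hr).mul_right _
  exact (h1.add h2).congr fun n => by push_cast; ring

lemma summable_log_aux (c r : ℂ) (hr : ‖r‖ < 1) (s : ℕ) :
    Summable fun n : ℕ => Complex.log ((1 - c * r ^ (n + 1)) ^ (n + s)) := by
  set t : ℕ → ℝ := fun n => ((n + s : ℕ) : ℝ) * (‖c‖ * ‖r‖ ^ (n + 1)) with ht_def
  have ht : Summable t := summable_t c r hr s
  have htend : Filter.Tendsto t atTop (nhds 0) := ht.tendsto_atTop_zero
  have hev : ∀ᶠ n in atTop, t n < 1 / 6 :=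
    htend.eventually (gt_mem_nhds (by norm_num))
  refine Summable.of_norm_bounded_eventually_nat (g := fun n => (9 / 2) * t n)
    (ht.mul_left _) ?_
  filter_upwards [hev] with n hn
  have htn0 : 0 ≤ t n := by positivity
  rcases Nat.eq_zero_or_pos (n + s) with hk | hk
  · rw [hk]; simp; positivity
  -- main case
  set w : ℂ := -(c * r ^ (n + 1)) with hw
  have hwn : ‖w‖ = ‖c‖ * ‖r‖ ^ (n + 1) := by
    rw [hw, norm_neg, norm_mul, norm_pow]
  have hkw : ((n + s : ℕ) : ℝ) * ‖w‖ = t n := by rw [hwn]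
  have hfw : (1 - c * r ^ (n + 1)) ^ (n + s) = 1 + ((1 + w) ^ (n + s) - 1) := by
    rw [hw]; ring
  have hb1 : ‖(1 + w) ^ (n + s) - 1‖ ≤ 3 * t n := by
    have h1 := norm_one_add_pow_sub_one_le w (n + s)
    have h2 := one_add_pow_sub_one_le ‖w‖ (norm_nonneg w) (n + s)
    have h3 : Real.exp (((n + s : ℕ) : ℝ) * ‖w‖) ≤ 3 := by
      calc Real.exp (((n + s : ℕ) : ℝ) * ‖w‖) ≤ Real.exp 1 := by
            apply Real.exp_le_exp.mpr; rw [hkw]; linarith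
        _ ≤ 3 := by linarith [Real.exp_one_lt_d9]
    have h4 : ((n + s : ℕ) : ℝ) * ‖w‖ * Real.exp (((n + s : ℕ) : ℝ) * ‖w‖) ≤ 3 * t n := by
      rw [hkw] at h3 ⊢; nlinarith
    linarith
  have hb2 : ‖(1 + w) ^ (n + s) - 1‖ ≤ 1 / 2 := by linarith
  calc ‖Complex.log ((1 - c * r ^ (n + 1)) ^ (n + s))‖
      = ‖Complex.log (1 + ((1 + w) ^ (n + s) - 1))‖ := by rw [hfw]
    _ ≤ 3 / 2 * ‖(1 + w) ^ (n + s) - 1‖ := Complex.norm_log_one_add_half_le_self hb2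
    _ ≤ 9 / 2 * t n := by linarith

lemma hasProd_zero_of_eq_zero {f : ℕ → ℂ} {n0 : ℕ} (h : f n0 = 0) : HasProd f 0 := by
  have hev : ∀ᶠ s in (atTop : Filter (Finset ℕ)), (fun _ => (0 : ℂ)) s = ∏ i ∈ s, f i := by
    filter_upwards [Filter.eventually_ge_atTop ({n0} : Finset ℕ)] with s hs
    exact (Finset.prod_eq_zero (hs (Finset.mem_singleton_self n0)) h).symm
  exact Filter.Tendsto.congr' hev tendsto_const_nhds

lemma multipliable_aux (c r : ℂ) (hr : ‖r‖ < 1) (s : ℕ) :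
    Multipliable fun n : ℕ => (1 - c * r ^ (n + 1)) ^ (n + s) := by
  by_cases hz : ∀ n : ℕ, (1 - c * r ^ (n + 1)) ^ (n + s) ≠ 0
  · exact Complex.multipliable_of_summable_log (summable_log_aux c r hr s)
  · push_neg at hz
    obtain ⟨n0, hn0⟩ := hz
    exact ⟨0, hasProd_zero_of_eq_zero hn0⟩

/-- The j-independent twisted-field tau-function
`τ_l = ∏_{n=1}^∞ (1 − Z·Q^{l+nN})ⁿ` of the `Y^{N,0}` system. -/
noncomputable def twistTauYN0 (N : ℕ) (Z Q : ℂ) (l : ℤ) : ℂ :=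
  ∏' n : ℕ, (1 - Z * Q ^ (l + (n + 1) * (N : ℤ))) ^ (n + 1)

/-- The products `τ_l = ∏_{n=1}^∞ (1 − Z·Q^{l+nN})ⁿ` are multipliable, satisfy
`τ_{l+N}·τ_{l−N} = (1 − Z·Q^l)·τ_l²`, and hence the constant-in-`j` family
`τ_{j,l} = τ_l` solves the `Y^{N,0}` bilinear system
`τ_{j,l+N}·τ_{j,l−N} = τ_{j,l}² − Z·Q^l·τ_{j+1,l}·τ_{j−1,l}`. -/
theorem twistTau_solves_YN0 (N : ℕ) (hN : 1 ≤ N) (Z Q : ℂ)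
    (hQ0 : 0 < ‖Q‖) (hQ1 : ‖Q‖ < 1)
    (T : ZMod N → ℤ → ℂ) (hT : ∀ (j : ZMod N) (l : ℤ), T j l = twistTauYN0 N Z Q l) :
    (∀ l : ℤ, Multipliable fun n : ℕ => (1 - Z * Q ^ (l + (n + 1) * (N : ℤ))) ^ (n + 1)) ∧
    (∀ l : ℤ, twistTauYN0 N Z Q (l + N) * twistTauYN0 N Z Q (l - N) =
      (1 - Z * Q ^ l) * (twistTauYN0 N Z Q l) ^ 2) ∧
    (∀ (j : ZMod N) (l : ℤ), T j (l + N) * T j (l - N) =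
      (T j l) ^ 2 - Z * Q ^ l * T (j + 1) l * T (j - 1) l) := by
  have hQne : Q ≠ 0 := norm_pos_iff.mp hQ0
  have hrN : ‖Q ^ N‖ < 1 := by
    rw [norm_pow]; exact pow_lt_one₀ (norm_nonneg _) hQ1 (by omega)
  have hsplit : ∀ (l : ℤ) (n : ℕ),
      Q ^ (l + (n : ℤ) * (N : ℤ)) = Q ^ l * (Q ^ N) ^ n := by
    intro l n
    rw [zpow_add₀ hQne]
    congr 1
    rw [show (n : ℤ) * (N : ℤ) = ((N * n : ℕ) : ℤ) by push_cast; ring,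
      zpow_natCast, pow_mul]
  have hmult : ∀ l : ℤ,
      Multipliable fun n : ℕ => (1 - Z * Q ^ (l + ((n : ℤ) + 1) * (N : ℤ))) ^ (n + 1) := by
    intro l
    refine (multipliable_aux (Z * Q ^ l) (Q ^ N) hrN 1).congr fun n => ?_
    rw [show l + ((n : ℤ) + 1) * (N : ℤ) = l + ((n + 1 : ℕ) : ℤ) * (N : ℤ) by push_cast; ring,
      hsplit l (n + 1), mul_assoc]
  have key : ∀ l : ℤ, twistTauYN0 N Z Q (l + N) * twistTauYN0 N Z Q (l - N) =
      (1 - Z * Q ^ l) * (twistTauYN0 N Z Q l) ^ 2 := by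
    intro l
    set a : ℕ → ℂ := fun m => 1 - (Z * Q ^ l) * (Q ^ N) ^ m with ha
    have M0 : Multipliable fun n : ℕ => a (n + 1) ^ n :=
      (multipliable_aux (Z * Q ^ l) (Q ^ N) hrN 0).congr fun n => by simp only [ha, Nat.add_zero]
    have M1 : Multipliable fun n : ℕ => a (n + 1) ^ (n + 1) :=
      (multipliable_aux (Z * Q ^ l) (Q ^ N) hrN 1).congr fun n => by simp only [ha]
    have M2 : Multipliable fun n : ℕ => a (n + 1) ^ (n + 2) :=
      (multipliable_aux (Z * Q ^ l) (Q ^ N) hrN 2).congr fun n => by simp only [ha]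
    have M1' : Multipliable fun n : ℕ => a (n + 2) ^ (n + 1) :=
      (multipliable_aux (Z * Q ^ l * Q ^ N) (Q ^ N) hrN 1).congr fun n => by
        simp only [ha]; ring
    have E1 : twistTauYN0 N Z Q l = ∏' n : ℕ, a (n + 1) ^ (n + 1) := by
      unfold twistTauYN0
      refine tprod_congr fun n => ?_
      simp only [ha]
      rw [show l + ((n : ℤ) + 1) * (N : ℤ) = l + ((n + 1 : ℕ) : ℤ) * (N : ℤ) by push_cast; ring,
        hsplit l (n + 1)]
      ring
    have E2 : twistTauYN0 N Z Q (l + N) = ∏' n : ℕ, a (n + 2) ^ (n + 1) := by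
      unfold twistTauYN0
      refine tprod_congr fun n => ?_
      simp only [ha]
      rw [show l + (N : ℤ) + ((n : ℤ) + 1) * (N : ℤ) = l + ((n + 2 : ℕ) : ℤ) * (N : ℤ) by
        push_cast; ring, hsplit l (n + 2)]
      ring
    have E3 : twistTauYN0 N Z Q (l - N) = ∏' n : ℕ, a n ^ (n + 1) := by
      unfold twistTauYN0
      refine tprod_congr fun n => ?_
      simp only [ha]
      rw [show l - (N : ℤ) + ((n : ℤ) + 1) * (N : ℤ) = l + ((n : ℕ) : ℤ) * (N : ℤ) by
        push_cast; ring, hsplit l n]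
      ring
    have S1 : (∏' n : ℕ, a n ^ (n + 1)) = a 0 * ∏' n : ℕ, a (n + 1) ^ (n + 2) := by
      simpa using tprod_eq_zero_mul' (f := fun n : ℕ => a n ^ (n + 1)) M2
    have S2' : (∏' n : ℕ, a (n + 2) ^ (n + 1)) = ∏' n : ℕ, a (n + 1) ^ n := by
      simpa using (tprod_eq_zero_mul' (f := fun n : ℕ => a (n + 1) ^ n) M1').symm
    have P : (∏' n : ℕ, a (n + 1) ^ n) * (∏' n : ℕ, a (n + 1) ^ (n + 2)) =
        (∏' n : ℕ, a (n + 1) ^ (n + 1)) * (∏' n : ℕ, a (n + 1) ^ (n + 1)) := by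
      rw [← Multipliable.tprod_mul M0 M2, ← Multipliable.tprod_mul M1 M1]
      refine tprod_congr fun n => ?_
      rw [← pow_add, ← pow_add]
      congr 1
      omega
    have ha0 : a 0 = 1 - Z * Q ^ l := by simp [ha]
    rw [E2, E3, E1, S1, S2', ha0]
    linear_combination (1 - Z * Q ^ l) * P
  refine ⟨hmult, key, fun j l => ?_⟩
  rw [hT, hT, hT, hT, hT]
  linear_combination key l
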